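/- For distinct points x, y in the Riemann sphere ℙ¹(ℂ), let K_{x,y} ⊂ SL(2,ℂ) be the set of matrices B with B·x = i and B·y = -i (Möbius action), and let k(x,y) = inf_{B ∈ K_{x,y}} ‖B‖². Then 1 ≤ d(x,y)·k(x,y) ≤ 2, where d(x,y) is the absolute value of the sine of the angle between the corresponding directions in ℂ². -/

import Mathlib

open Matrix Complex Filter

noncomputable section

/-- Operator norm of a 2×2 complex matrix acting on ℂ². -/
def opN (A : Matrix (Fin 2) (Fin 2) ℂ) : ℝ :=
  ‖Matrix.toEuclideanCLM (𝕜 := ℂ) (n := Fin 2) A‖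

/-- Determinant of the 2×2 matrix with columns u, v. -/
def crossDet (u v : Fin 2 → ℂ) : ℂ := u 0 * v 1 - u 1 * v 0

/-- Euclidean norm of a vector in ℂ². -/
def vnorm (u : Fin 2 → ℂ) : ℝ := Real.sqrt (‖u 0‖ ^ 2 + ‖u 1‖ ^ 2)

/-- Sine-of-angle distance between the directions of two nonzero vectors. -/
def dSin (u v : Fin 2 → ℂ) : ℝ := ‖crossDet u v‖ / (vnorm u * vnorm v)

/-- Two vectors span the same direction (are parallel). -/
def SameDir (u v : Fin 2 → ℂ) : Prop := crossDet u v = 0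

def vI : Fin 2 → ℂ := ![Complex.I, 1]
def vmI : Fin 2 → ℂ := ![-Complex.I, 1]

abbrev SL2C := Matrix.SpecialLinearGroup (Fin 2) ℂ

/-- The set K_{x,y} of B ∈ SL(2,ℂ) sending direction x to i and y to -i. -/
def Kset (x y : Fin 2 → ℂ) : Set SL2C :=
  {B | SameDir ((B : Matrix (Fin 2) (Fin 2) ℂ).mulVec x) vI ∧
       SameDir ((B : Matrix (Fin 2) (Fin 2) ℂ).mulVec y) vmI}

/-- k(x,y) = inf over K_{x,y} of ‖B‖². -/
def kfun (x y : Fin 2 → ℂ) : ℝ :=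
  sInf ((fun B : SL2C => opN (B : Matrix (Fin 2) (Fin 2) ℂ) ^ 2) '' Kset x y)

/-- B is minimizing: ‖B⁻¹·(i,1)‖ = ‖B⁻¹·(-i,1)‖. -/
def Minimizing (B : SL2C) : Prop :=
  vnorm ((((B⁻¹ : SL2C) : Matrix (Fin 2) (Fin 2) ℂ)).mulVec vI) =
  vnorm (((B⁻¹ : SL2C) : Matrix (Fin 2) (Fin 2) ℂ).mulVec vmI)

/-- Rotation matrix R_λ, for complex λ. -/
def Rmat (l : ℂ) : Matrix (Fin 2) (Fin 2) ℂ :=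
  !![Complex.cos (2 * Real.pi * l), -Complex.sin (2 * Real.pi * l);
     Complex.sin (2 * Real.pi * l), Complex.cos (2 * Real.pi * l)]

/-- Diagonal matrix D_μ = diag(μ, μ⁻¹). -/
def Dmat (m : ℂ) : Matrix (Fin 2) (Fin 2) ℂ := !![m, 0; 0, m⁻¹]

/-- Möbius action of a 2×2 complex matrix on ℂ. -/
def moebius (A : Matrix (Fin 2) (Fin 2) ℂ) (z : ℂ) : ℂ :=
  (A 0 0 * z + A 0 1) / (A 1 0 * z + A 1 1)

/-- Cocycle product B_n(x) = B(x+(n-1)α) ⋯ B(x). -/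
def coc (α : ℝ) (B : ℝ → Matrix (Fin 2) (Fin 2) ℂ) : ℕ → ℝ → Matrix (Fin 2) (Fin 2) ℂ
  | 0, _ => 1
  | n + 1, x => B (x + n * α) * coc α B n x

/-- Uniform hyperbolicity of the cocycle (α, B), witnessed by continuous
invariant unstable/stable direction fields U, S with exponential expansion/contraction. -/
def UnifHyp (α : ℝ) (B : ℝ → Matrix (Fin 2) (Fin 2) ℂ) (U S : ℝ → Fin 2 → ℂ) : Prop :=
  Continuous U ∧ Continuous S ∧ (∀ x, U x ≠ 0) ∧ (∀ x, S x ≠ 0) ∧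
  (∀ x, SameDir (U (x + 1)) (U x)) ∧ (∀ x, SameDir (S (x + 1)) (S x)) ∧
  (∀ x, SameDir ((B x).mulVec (U x)) (U (x + α))) ∧
  (∀ x, SameDir ((B x).mulVec (S x)) (S (x + α))) ∧
  ∃ C > 0, ∃ lam > 1, ∀ n : ℕ, ∀ x : ℝ,
    vnorm ((coc α B n x).mulVec (U x)) ≥ C⁻¹ * lam ^ n * vnorm (U x) ∧
    vnorm ((coc α B n x).mulVec (S x)) ≤ C * lam⁻¹ ^ n * vnorm (S x)

/-- The Lyapunov exponent of the cocycle (α, B) is L. -/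
def IsLE (α : ℝ) (B : ℝ → Matrix (Fin 2) (Fin 2) ℂ) (L : ℝ) : Prop :=
  Tendsto (fun n : ℕ => (n : ℝ)⁻¹ * ∫ x in (0:ℝ)..1, Real.log (opN (coc α B n x)))
    atTop (nhds L)

/-- Complexification of a real matrix. -/
def cplx (A : Matrix (Fin 2) (Fin 2) ℝ) : Matrix (Fin 2) (Fin 2) ℂ :=
  A.map (Complex.ofReal)

/-- The denominators q_n of the continued fraction approximants. -/
def qden (α : ℝ) (n : ℕ) : ℝ := (GenContFract.of α).dens n

/-- β(α) = limsup (ln q_{n+1})/q_n. -/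
def betaCF (α : ℝ) : ℝ :=
  Filter.limsup (fun n : ℕ => Real.log (qden α (n + 1)) / qden α n) atTop

end

noncomputable section

-- helpers
def frobSq (A : Matrix (Fin 2) (Fin 2) ℂ) : ℝ :=
  ‖A 0 0‖ ^ 2 + ‖A 0 1‖ ^ 2 + ‖A 1 0‖ ^ 2 + ‖A 1 1‖ ^ 2

lemma mulVec_ent0 (A : Matrix (Fin 2) (Fin 2) ℂ) (u : Fin 2 → ℂ) :
    (A.mulVec u) 0 = A 0 0 * u 0 + A 0 1 * u 1 := by
  simp [Matrix.mulVec, dotProduct, Fin.sum_univ_two]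

lemma mulVec_ent1 (A : Matrix (Fin 2) (Fin 2) ℂ) (u : Fin 2 → ℂ) :
    (A.mulVec u) 1 = A 1 0 * u 0 + A 1 1 * u 1 := by
  simp [Matrix.mulVec, dotProduct, Fin.sum_univ_two]

lemma ev_norm (u : Fin 2 → ℂ) :
    ‖(WithLp.equiv 2 (Fin 2 → ℂ)).symm u‖ = vnorm u := by
  rw [EuclideanSpace.norm_eq]
  simp [vnorm, Fin.sum_univ_two, WithLp.equiv_symm_apply, PiLp.toLp_apply]

lemma vnorm_nonneg (u : Fin 2 → ℂ) : 0 ≤ vnorm u := Real.sqrt_nonneg _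

lemma vnorm_sq (u : Fin 2 → ℂ) : vnorm u ^ 2 = ‖u 0‖ ^ 2 + ‖u 1‖ ^ 2 :=
  Real.sq_sqrt (by positivity)

lemma vnorm_pos {u : Fin 2 → ℂ} (hu : u ≠ 0) : 0 < vnorm u := by
  have h : u 0 ≠ 0 ∨ u 1 ≠ 0 := by
    by_contra h
    push_neg at h
    exact hu (funext fun i => by fin_cases i <;> simp [h.1, h.2])
  have h2 : 0 < ‖u 0‖ ^ 2 + ‖u 1‖ ^ 2 := by
    rcases h with h | h
    · have := norm_pos_iff.mpr h; positivity
    · have := norm_pos_iff.mpr h; positivity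
  exact Real.sqrt_pos.mpr h2

lemma vnorm_smul (c : ℂ) (u : Fin 2 → ℂ) : vnorm (c • u) = ‖c‖ * vnorm u := by
  unfold vnorm
  simp only [Pi.smul_apply, smul_eq_mul, norm_mul, mul_pow]
  rw [show ‖c‖ ^ 2 * ‖u 0‖ ^ 2 + ‖c‖ ^ 2 * ‖u 1‖ ^ 2
      = ‖c‖ ^ 2 * (‖u 0‖ ^ 2 + ‖u 1‖ ^ 2) from by ring,
    Real.sqrt_mul (sq_nonneg _), Real.sqrt_sq (norm_nonneg _)]

lemma vnorm_mulVec_le (A : Matrix (Fin 2) (Fin 2) ℂ) (u : Fin 2 → ℂ) :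
    vnorm (A.mulVec u) ≤ opN A * vnorm u := by
  have := (Matrix.toEuclideanCLM (𝕜 := ℂ) (n := Fin 2) A).le_opNorm
    ((WithLp.equiv 2 (Fin 2 → ℂ)).symm u)
  change ‖(WithLp.equiv 2 (Fin 2 → ℂ)).symm (A *ᵥ u)‖ ≤ _ at this
  rwa [ev_norm, ev_norm] at this

lemma opN_nonneg (A : Matrix (Fin 2) (Fin 2) ℂ) : 0 ≤ opN A := norm_nonneg _

lemma frob_le_two_opN_sq (A : Matrix (Fin 2) (Fin 2) ℂ) :
    frobSq A ≤ 2 * opN A ^ 2 := by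
  have h0 := vnorm_mulVec_le A ![1, 0]
  have h1 := vnorm_mulVec_le A ![0, 1]
  have e0 : vnorm (A.mulVec ![1, 0]) ^ 2 = ‖A 0 0‖ ^ 2 + ‖A 1 0‖ ^ 2 := by
    rw [vnorm_sq, mulVec_ent0, mulVec_ent1]; norm_num
  have e1 : vnorm (A.mulVec ![0, 1]) ^ 2 = ‖A 0 1‖ ^ 2 + ‖A 1 1‖ ^ 2 := by
    rw [vnorm_sq, mulVec_ent0, mulVec_ent1]; norm_num
  have v0 : vnorm ![(1:ℂ), 0] = 1 := by simp [vnorm]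
  have v1 : vnorm ![(0:ℂ), 1] = 1 := by simp [vnorm]
  rw [v0, mul_one] at h0
  rw [v1, mul_one] at h1
  have q0 : vnorm (A.mulVec ![1, 0]) ^ 2 ≤ opN A ^ 2 :=
    pow_le_pow_left₀ (vnorm_nonneg _) h0 2
  have q1 : vnorm (A.mulVec ![0, 1]) ^ 2 ≤ opN A ^ 2 :=
    pow_le_pow_left₀ (vnorm_nonneg _) h1 2
  rw [e0] at q0; rw [e1] at q1
  unfold frobSq; linarith

lemma opN_sq_le_frob (A : Matrix (Fin 2) (Fin 2) ℂ) :
    opN A ^ 2 ≤ frobSq A := by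
  have hF : 0 ≤ frobSq A := by unfold frobSq; positivity
  have hb : opN A ≤ Real.sqrt (frobSq A) := by
    apply ContinuousLinearMap.opNorm_le_bound _ (Real.sqrt_nonneg _)
    intro v
    set u : Fin 2 → ℂ := WithLp.equiv 2 (Fin 2 → ℂ) v with hu
    have hv : v = (WithLp.equiv 2 (Fin 2 → ℂ)).symm u := ((WithLp.equiv 2 _).symm_apply_apply v).symm
    rw [hv]
    change ‖(WithLp.equiv 2 (Fin 2 → ℂ)).symm (A *ᵥ u)‖ ≤ _
    rw [ev_norm, ev_norm]
    have key : vnorm (A.mulVec u) ^ 2 ≤ frobSq A * vnorm u ^ 2 := by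
      rw [vnorm_sq, vnorm_sq, mulVec_ent0, mulVec_ent1]
      have cs : ∀ p q r s : ℂ, ‖p * q + r * s‖ ^ 2 ≤
          (‖p‖ ^ 2 + ‖r‖ ^ 2) * (‖q‖ ^ 2 + ‖s‖ ^ 2) := by
        intro p q r s
        have h := norm_add_le (p * q) (r * s)
        have h2 : ‖p * q + r * s‖ ^ 2 ≤ (‖p‖ * ‖q‖ + ‖r‖ * ‖s‖) ^ 2 := by
          apply pow_le_pow_left₀ (norm_nonneg _)
          simpa [norm_mul] using h
        nlinarith [sq_nonneg (‖p‖ * ‖s‖ - ‖r‖ * ‖q‖), norm_nonneg p, norm_nonneg q,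
          norm_nonneg r, norm_nonneg s]
      have c0 := cs (A 0 0) (u 0) (A 0 1) (u 1)
      have c1 := cs (A 1 0) (u 0) (A 1 1) (u 1)
      unfold frobSq; nlinarith [sq_nonneg (‖u 0‖), sq_nonneg (‖u 1‖), norm_nonneg (A 0 0)]
    calc vnorm (A.mulVec u) = Real.sqrt (vnorm (A.mulVec u) ^ 2) :=
          (Real.sqrt_sq (vnorm_nonneg _)).symm
      _ ≤ Real.sqrt (frobSq A * vnorm u ^ 2) := Real.sqrt_le_sqrt key
      _ = Real.sqrt (frobSq A) * vnorm u := by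
          rw [Real.sqrt_mul hF, Real.sqrt_sq (vnorm_nonneg _)]
  calc opN A ^ 2 ≤ Real.sqrt (frobSq A) ^ 2 := pow_le_pow_left₀ (opN_nonneg _) hb 2
    _ = frobSq A := Real.sq_sqrt hF

lemma nsq (z : ℂ) : ‖z‖ ^ 2 = z.re ^ 2 + z.im ^ 2 := by
  rw [Complex.sq_norm, Complex.normSq_apply]; ring

lemma par_id (M : Matrix (Fin 2) (Fin 2) ℂ) :
    vnorm (M.mulVec vI) ^ 2 + vnorm (M.mulVec vmI) ^ 2 = 2 * frobSq M := by
  rw [vnorm_sq, vnorm_sq, mulVec_ent0, mulVec_ent1, mulVec_ent0, mulVec_ent1]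
  unfold frobSq
  simp only [vI, vmI, Matrix.cons_val_zero, Matrix.cons_val_one, Matrix.head_cons, nsq]
  simp only [Complex.add_re, Complex.add_im, Complex.mul_re, Complex.mul_im,
    Complex.I_re, Complex.I_im, Complex.neg_re, Complex.neg_im, Complex.one_re, Complex.one_im]
  ring

lemma frobSq_adjugate (M : Matrix (Fin 2) (Fin 2) ℂ) :
    frobSq (Matrix.adjugate M) = frobSq M := by
  rw [Matrix.adjugate_fin_two]
  unfold frobSq
  simp [norm_neg]
  ring

lemma crossDet_mulVec (A : Matrix (Fin 2) (Fin 2) ℂ) (u v : Fin 2 → ℂ) :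
    crossDet (A.mulVec u) (A.mulVec v) = A.det * crossDet u v := by
  simp only [crossDet, mulVec_ent0, mulVec_ent1, Matrix.det_fin_two]
  ring

end

set_option maxHeartbeats 800000 in
lemma witness_aux (x y : Fin 2 → ℂ) (hx : x ≠ 0) (hy : y ≠ 0) (hΔ : crossDet x y ≠ 0) :
    ∃ B0 ∈ Kset x y, opN (B0 : Matrix (Fin 2) (Fin 2) ℂ) ^ 2 ≤
      2 * (vnorm x * vnorm y) / ‖crossDet x y‖ := by
  set Δ : ℂ := crossDet x y with hΔdef
  set nx : ℝ := vnorm x with hnxdef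
  set ny : ℝ := vnorm y with hnydef
  set δ : ℝ := ‖Δ‖ with hδdef
  have hnx : 0 < nx := vnorm_pos hx
  have hny : 0 < ny := vnorm_pos hy
  have hδ : 0 < δ := norm_pos_iff.mpr hΔ
  set a0 : ℝ := Real.sqrt (δ * nx / (2 * ny)) with ha0def
  have harg : 0 < δ * nx / (2 * ny) := div_pos (mul_pos hδ hnx) (by linarith)
  have ha0 : 0 < a0 := Real.sqrt_pos.mpr harg
  have ha0sq : a0 ^ 2 = δ * nx / (2 * ny) := Real.sq_sqrt harg.le
  have ha0C : (a0 : ℂ) ≠ 0 := by simpa using ha0.ne'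
  set b0 : ℂ := Δ / (2 * Complex.I * (a0 : ℂ)) with hb0def
  have h2Ia : (2 * Complex.I * (a0 : ℂ)) ≠ 0 := by
    simp [Complex.I_ne_zero, ha0C]
  have hb0 : b0 ≠ 0 := div_ne_zero hΔ h2Ia
  have hrel : 2 * Complex.I * (a0 : ℂ) * b0 = Δ := by
    rw [hb0def, mul_div_cancel₀ _ h2Ia]
  set p : ℂ := ((a0 : ℂ))⁻¹ with hpdef
  set q : ℂ := b0⁻¹ with hqdef
  have hp : p ≠ 0 := inv_ne_zero ha0C
  have hq : q ≠ 0 := inv_ne_zero hb0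
  have hab' : (a0 : ℂ) * b0 = Δ / (2 * Complex.I) := by
    rw [eq_div_iff (mul_ne_zero two_ne_zero Complex.I_ne_zero)]
    linear_combination hrel
  have hpq : (x 0 * y 1 - x 1 * y 0) * (p * q) = 2 * Complex.I := by
    rw [show x 0 * y 1 - x 1 * y 0 = Δ from rfl, hpdef, hqdef, ← mul_inv, hab', inv_div,
      mul_comm, div_mul_cancel₀ _ hΔ]
  set M0 : Matrix (Fin 2) (Fin 2) ℂ :=
    !![(p * x 0 - q * y 0) * (-Complex.I) / 2, (p * x 0 + q * y 0) / 2;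
       (p * x 1 - q * y 1) * (-Complex.I) / 2, (p * x 1 + q * y 1) / 2] with hM0
  have hdet0 : M0.det = 1 := by
    rw [hM0, Matrix.det_fin_two_of]
    linear_combination (-Complex.I / 2) * hpq - Complex.I_sq
  have hMvI : M0.mulVec vI = p • x := by
    funext i
    fin_cases i
    · simp [hM0, mulVec_ent0, vI]
      linear_combination (-(p * x 0 - q * y 0) / 2) * Complex.I_sq
    · simp [hM0, mulVec_ent1, vI]
      linear_combination (-(p * x 1 - q * y 1) / 2) * Complex.I_sq
  have hMvmI : M0.mulVec vmI = q • y := by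
    funext i
    fin_cases i
    · simp [hM0, mulVec_ent0, vmI]
      linear_combination ((p * x 0 - q * y 0) / 2) * Complex.I_sq
    · simp [hM0, mulVec_ent1, vmI]
      linear_combination ((p * x 1 - q * y 1) / 2) * Complex.I_sq
  set B0 : SL2C := (⟨M0, hdet0⟩ : SL2C)⁻¹ with hB0
  have hB0coe : (B0 : Matrix (Fin 2) (Fin 2) ℂ) = M0.adjugate :=
    Matrix.SpecialLinearGroup.coe_inv _
  have hadjM : M0.adjugate * M0 = 1 := by rw [Matrix.adjugate_mul, hdet0, one_smul]
  have hmem : B0 ∈ Kset x y := by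
    constructor
    · show crossDet ((B0 : Matrix (Fin 2) (Fin 2) ℂ).mulVec x) vI = 0
      have hxeq : x = p⁻¹ • M0.mulVec vI := by
        rw [hMvI, smul_smul, inv_mul_cancel₀ hp, one_smul]
      rw [hB0coe, hxeq, Matrix.mulVec_smul, Matrix.mulVec_mulVec, hadjM, Matrix.one_mulVec]
      simp [crossDet, vI]
    · show crossDet ((B0 : Matrix (Fin 2) (Fin 2) ℂ).mulVec y) vmI = 0
      have hyeq : y = q⁻¹ • M0.mulVec vmI := by
        rw [hMvmI, smul_smul, inv_mul_cancel₀ hq, one_smul]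
      rw [hB0coe, hyeq, Matrix.mulVec_smul, Matrix.mulVec_mulVec, hadjM, Matrix.one_mulVec]
      simp [crossDet, vmI]
  have ha0n : ‖((a0 : ℝ) : ℂ)‖ = a0 := by
    rw [Complex.norm_real, Real.norm_eq_abs, abs_of_pos ha0]
  have hpn : ‖p‖ = a0⁻¹ := by rw [hpdef, norm_inv, ha0n]
  have hb0n : ‖b0‖ = δ / (2 * a0) := by
    rw [hb0def, norm_div, norm_mul, norm_mul, Complex.norm_I, ha0n]
    simp
    rw [hδdef]
  have hqn : ‖q‖ = 2 * a0 / δ := by rw [hqdef, norm_inv, hb0n, inv_div]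
  have e1 : vnorm (M0.mulVec vI) = a0⁻¹ * nx := by rw [hMvI, vnorm_smul, hpn]
  have e2 : vnorm (M0.mulVec vmI) = 2 * a0 / δ * ny := by rw [hMvmI, vnorm_smul, hqn]
  have hpar0 := par_id M0
  rw [e1, e2] at hpar0
  have hfr : frobSq M0 = 2 * (nx * ny) / δ := by
    have h2 : (a0⁻¹ * nx) ^ 2 + (2 * a0 / δ * ny) ^ 2
        = nx ^ 2 / a0 ^ 2 + 4 * a0 ^ 2 * ny ^ 2 / δ ^ 2 := by ring
    have key : (a0⁻¹ * nx) ^ 2 + (2 * a0 / δ * ny) ^ 2 = 2 * (2 * (nx * ny) / δ) := by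
      rw [h2, ha0sq]
      field_simp
      ring
    linarith [hpar0, key]
  refine ⟨B0, hmem, ?_⟩
  rw [hB0coe]
  calc opN M0.adjugate ^ 2 ≤ frobSq M0.adjugate := opN_sq_le_frob _
    _ = frobSq M0 := frobSq_adjugate _
    _ = 2 * (nx * ny) / δ := hfr

set_option maxHeartbeats 800000 in
lemma lower_aux (x y : Fin 2 → ℂ) (hΔ : crossDet x y ≠ 0) :
    ∀ B : SL2C, B ∈ Kset x y →
      vnorm x * vnorm y / ‖crossDet x y‖ ≤ opN (B : Matrix (Fin 2) (Fin 2) ℂ) ^ 2 := by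
  set Δ : ℂ := crossDet x y with hΔdef
  set nx : ℝ := vnorm x with hnxdef
  set ny : ℝ := vnorm y with hnydef
  set δ : ℝ := ‖Δ‖ with hδdef
  have hδ : 0 < δ := norm_pos_iff.mpr hΔ
  rintro B ⟨h1, h2⟩
  set N : Matrix (Fin 2) (Fin 2) ℂ := (B : Matrix (Fin 2) (Fin 2) ℂ) with hN
  have hdet : N.det = 1 := B.prop
  set w : Fin 2 → ℂ := N.mulVec x with hw
  set w' : Fin 2 → ℂ := N.mulVec y with hw'
  have ha0 : w 0 = w 1 * Complex.I := by
    have h : w 0 * 1 - w 1 * Complex.I = 0 := by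
      simpa [SameDir, crossDet, vI] using h1
    linear_combination h
  have hb0 : w' 0 = -(w' 1 * Complex.I) := by
    have h : w' 0 * 1 - w' 1 * (-Complex.I) = 0 := by
      simpa [SameDir, crossDet, vmI] using h2
    linear_combination h
  set a : ℂ := w 1 with ha'
  set b : ℂ := w' 1 with hb'
  have hab : 2 * Complex.I * (a * b) = Δ := by
    have h := crossDet_mulVec N x y
    rw [hdet, one_mul, ← hw, ← hw', ← hΔdef] at h
    rw [crossDet, ha0, hb0] at h
    linear_combination h
  have ha : a ≠ 0 := by
    intro h
    apply hΔ
    rw [← hab, h]; ring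
  have hb : b ≠ 0 := by
    intro h
    apply hΔ
    rw [← hab, h]; ring
  have hwa : w = a • vI := by
    funext i
    fin_cases i
    · simpa [vI] using ha0
    · simp [vI]; rfl
  have hw'b : w' = b • vmI := by
    funext i
    fin_cases i
    · simpa [vmI] using hb0
    · simp [vmI]; rfl
  set M : Matrix (Fin 2) (Fin 2) ℂ := N.adjugate with hM
  have hMN : M * N = 1 := by rw [hM, Matrix.adjugate_mul, hdet, one_smul]
  have hMw : M.mulVec w = x := by
    rw [hw, Matrix.mulVec_mulVec, hMN, Matrix.one_mulVec]
  have hMw' : M.mulVec w' = y := by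
    rw [hw', Matrix.mulVec_mulVec, hMN, Matrix.one_mulVec]
  have hMvI : M.mulVec vI = a⁻¹ • x := by
    rw [← hMw, hwa, Matrix.mulVec_smul, smul_smul, inv_mul_cancel₀ ha, one_smul]
  have hMvmI : M.mulVec vmI = b⁻¹ • y := by
    rw [← hMw', hw'b, Matrix.mulVec_smul, smul_smul, inv_mul_cancel₀ hb, one_smul]
  have hpar := par_id M
  rw [hMvI, hMvmI, vnorm_smul, vnorm_smul] at hpar
  have habn : ‖a‖ * ‖b‖ = δ / 2 := by
    have h : ‖2 * Complex.I * (a * b)‖ = δ := by rw [hab]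
    rw [norm_mul, norm_mul, norm_mul, Complex.norm_I] at h
    simp only [Complex.norm_ofNat] at h
    linarith
  have hFN : frobSq M = frobSq N := frobSq_adjugate N
  have hfb := frob_le_two_opN_sq N
  have hna : 0 < ‖a‖ := norm_pos_iff.mpr ha
  have hnb : 0 < ‖b‖ := norm_pos_iff.mpr hb
  rw [norm_inv, norm_inv] at hpar
  have am : 2 * ((‖a‖⁻¹ * nx) * (‖b‖⁻¹ * ny)) ≤
      (‖a‖⁻¹ * nx) ^ 2 + (‖b‖⁻¹ * ny) ^ 2 := by
    nlinarith [sq_nonneg (‖a‖⁻¹ * nx - ‖b‖⁻¹ * ny)]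
  have prod : (‖a‖⁻¹ * nx) * (‖b‖⁻¹ * ny) = 2 * (nx * ny / δ) := by
    have hh1 : (‖a‖⁻¹ * nx) * (‖b‖⁻¹ * ny) = nx * ny / (‖a‖ * ‖b‖) := by
      field_simp
    rw [hh1, habn]
    rw [div_div_eq_mul_div]
    rw [mul_comm (nx * ny) 2, mul_div_assoc]
  rw [prod] at am
  nlinarith [hpar, am, hfb, hFN]


set_option maxHeartbeats 800000 in
/-- 1 ≤ d(x,y)·k(x,y) ≤ 2. -/
theorem stmt1 (x y : Fin 2 → ℂ) (hx : x ≠ 0) (hy : y ≠ 0) (hdist : ¬ SameDir x y) :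
    1 ≤ dSin x y * kfun x y ∧ dSin x y * kfun x y ≤ 2 := by
  have hΔ : crossDet x y ≠ 0 := hdist
  have hnx : 0 < vnorm x := vnorm_pos hx
  have hny : 0 < vnorm y := vnorm_pos hy
  have hδ : 0 < ‖crossDet x y‖ := norm_pos_iff.mpr hΔ
  set nx : ℝ := vnorm x with hnxdef
  set ny : ℝ := vnorm y with hnydef
  set δ : ℝ := ‖crossDet x y‖ with hδdef
  have hd : dSin x y = δ / (nx * ny) := rfl
  obtain ⟨B0, hmem, hwit⟩ := witness_aux x y hx hy hΔ
  have hBdd : BddBelow ((fun B : SL2C => opN (B : Matrix (Fin 2) (Fin 2) ℂ) ^ 2) '' Kset x y) := by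
    refine ⟨0, ?_⟩
    rintro t ⟨B, _, rfl⟩
    positivity
  have hne : ((fun B : SL2C => opN (B : Matrix (Fin 2) (Fin 2) ℂ) ^ 2) '' Kset x y).Nonempty :=
    ⟨_, ⟨B0, hmem, rfl⟩⟩
  have hklow : nx * ny / δ ≤ kfun x y := by
    apply le_csInf hne
    rintro t ⟨B, hB, rfl⟩
    exact lower_aux x y hΔ B hB
  have hkup : kfun x y ≤ 2 * (nx * ny) / δ :=
    (csInf_le hBdd ⟨B0, hmem, rfl⟩).trans hwit
  have hdpos : 0 < δ / (nx * ny) := div_pos hδ (mul_pos hnx hny)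
  constructor
  · calc (1 : ℝ) = δ / (nx * ny) * (nx * ny / δ) := by
          field_simp
      _ ≤ dSin x y * kfun x y := by
          rw [hd]
          exact mul_le_mul_of_nonneg_left hklow hdpos.le
  · calc dSin x y * kfun x y ≤ δ / (nx * ny) * (2 * (nx * ny) / δ) := by
          rw [hd]
          exact mul_le_mul_of_nonneg_left hkup hdpos.le
      _ = 2 := by field_simp
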